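/- Stability of the least singular value along a trajectory: let φ_1, …, φ_K : ℝ → ℝ be bounded by B and B-Lipschitz on ℝ, fix c ∈ ℝ^N and data x̃_1, …, x̃_m with K ≥ m, and for Θ = (α, V) define the K×m matrix A(Θ) by A(Θ)_{kj} = Σ_{i=1}^N c_i α_k φ_k(v_iᵀ x̃_j). Let C = √(1 + (max_j ‖x̃_j‖ · ‖α‖_∞)²) · ‖c‖_1 · B · √(K m), and let λ0 = σ_min(A(Θ(0))) where σ_min is the m-th largest singular value. If a parameter path Θ(t) satisfies ‖Θ(t) − Θ(0)‖_F ≤ λ0 / (2C) for all t ∈ [0, T], then σ_min(A(Θ(t))) ≥ λ0 / 2 for all t ∈ [0, T]. -/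

import Mathlib

open scoped BigOperators

noncomputable section

/-- Euclidean norm of a finitely-indexed real vector. -/
def euclNorm {ι : Type*} [Fintype ι] (u : ι → ℝ) : ℝ := Real.sqrt (∑ i, (u i) ^ 2)

/-- For a `K × m` real matrix with `K ≥ m`, the `m`-th largest (i.e. least) singular value,
characterized as the infimum of `‖A x‖` over Euclidean unit vectors `x ∈ ℝ^m`. -/
def sigmaMin {K m : ℕ} (A : Matrix (Fin K) (Fin m) ℝ) : ℝ :=
  ⨅ x : {x : Fin m → ℝ // euclNorm x = 1}, euclNorm (A.mulVec x)

/-- The matrix `A(Θ)_{kj} = Σ_i c_i α_k φ_k(v_iᵀ x̃_j)` for parameters `Θ = (α, V)`. -/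
def featMat {N d K m : ℕ} (φ : Fin K → ℝ → ℝ) (c : Fin N → ℝ)
    (xt : Fin m → Fin (d + 1) → ℝ) (α : Fin K → ℝ) (V : Fin N → Fin (d + 1) → ℝ) :
    Matrix (Fin K) (Fin m) ℝ :=
  Matrix.of fun k j => ∑ i, c i * α k * φ k (∑ l, V i l * xt j l)

section AuxLemmas

variable {ι : Type*} [Fintype ι]

lemma euclNorm_nonneg (u : ι → ℝ) : 0 ≤ euclNorm u := Real.sqrt_nonneg _

lemma euclNorm_sq (u : ι → ℝ) : euclNorm u ^ 2 = ∑ i, u i ^ 2 :=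
  Real.sq_sqrt (Finset.sum_nonneg fun _ _ => sq_nonneg _)

lemma euclNorm_eq_norm (u : ι → ℝ) :
    euclNorm u = ‖(WithLp.equiv 2 (ι → ℝ)).symm u‖ := by
  rw [EuclideanSpace.norm_eq]
  simp [euclNorm, sq_abs]

lemma euclNorm_triangle (u v : ι → ℝ) : euclNorm (u + v) ≤ euclNorm u + euclNorm v := by
  simp only [euclNorm_eq_norm]
  exact norm_add_le ((WithLp.equiv 2 (ι → ℝ)).symm u) ((WithLp.equiv 2 (ι → ℝ)).symm v)

lemma abs_sum_mul_le (u v : ι → ℝ) : |∑ i, u i * v i| ≤ euclNorm u * euclNorm v := by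
  calc |∑ i, u i * v i| = Real.sqrt ((∑ i, u i * v i) ^ 2) := (Real.sqrt_sq_eq_abs _).symm
    _ ≤ Real.sqrt ((∑ i, u i ^ 2) * ∑ i, v i ^ 2) :=
        Real.sqrt_le_sqrt (Finset.sum_mul_sq_le_sq_mul_sq Finset.univ u v)
    _ = euclNorm u * euclNorm v := Real.sqrt_mul (by positivity) _

lemma add_mul_le_sqrt (L a b : ℝ) (ha : 0 ≤ a) (hb : 0 ≤ b) (hL : 0 ≤ L) :
    a + L * b ≤ Real.sqrt (1 + L ^ 2) * Real.sqrt (a ^ 2 + b ^ 2) := by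
  rw [← Real.sqrt_mul (by positivity)]
  rw [show a + L * b = Real.sqrt ((a + L * b) ^ 2) from (Real.sqrt_sq (by positivity)).symm]
  apply Real.sqrt_le_sqrt
  nlinarith [sq_nonneg (L * a - b)]

lemma sigmaMin_nonneg {K m : ℕ} (A : Matrix (Fin K) (Fin m) ℝ) : 0 ≤ sigmaMin A :=
  Real.iInf_nonneg fun _ => euclNorm_nonneg _

lemma sigmaMin_le {K m : ℕ} (A : Matrix (Fin K) (Fin m) ℝ) (x : Fin m → ℝ)
    (hx : euclNorm x = 1) : sigmaMin A ≤ euclNorm (A.mulVec x) :=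
  ciInf_le ⟨0, by rintro y ⟨i, rfl⟩; exact euclNorm_nonneg _⟩
    (⟨x, hx⟩ : {x : Fin m → ℝ // euclNorm x = 1})

lemma sigmaMin_zero_cols {K : ℕ} (A : Matrix (Fin K) (Fin 0) ℝ) : sigmaMin A = 0 := by
  haveI : IsEmpty {x : Fin 0 → ℝ // euclNorm x = 1} := by
    constructor; rintro ⟨x, hx⟩
    simp [euclNorm] at hx
  exact Real.iInf_of_isEmpty _

lemma unit_exists {m : ℕ} (hm : 0 < m) : Nonempty {x : Fin m → ℝ // euclNorm x = 1} := by
  refine ⟨⟨Pi.single (M := fun _ : Fin m => ℝ) ⟨0, hm⟩ 1, ?_⟩⟩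
  have h : ∑ i, (Pi.single (M := fun _ : Fin m => ℝ) ⟨0, hm⟩ 1 i) ^ 2 = 1 := by
    rw [Finset.sum_eq_single ⟨0, hm⟩]
    · simp
    · intro b _ hb; simp [Pi.single_apply, hb]
    · simp
  simp [euclNorm, h]

lemma mulVec_bound {K m : ℕ} (A : Matrix (Fin K) (Fin m) ℝ) (x : Fin m → ℝ)
    (hx : euclNorm x = 1) (b : ℝ) (hb : 0 ≤ b) (hA : ∀ k j, |A k j| ≤ b) :
    euclNorm (A.mulVec x) ≤ Real.sqrt ((K : ℝ) * m) * b := by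
  have hx2 : ∑ j, x j ^ 2 = 1 := by
    have h := euclNorm_sq x
    rw [hx] at h; simpa using h.symm
  have key : ∀ k, (A.mulVec x k) ^ 2 ≤ ∑ j, A k j ^ 2 := by
    intro k
    have hmv : A.mulVec x k = ∑ j, A k j * x j := rfl
    rw [hmv]
    calc (∑ j, A k j * x j) ^ 2 ≤ (∑ j, A k j ^ 2) * ∑ j, x j ^ 2 :=
          Finset.sum_mul_sq_le_sq_mul_sq Finset.univ (A k) x
      _ = ∑ j, A k j ^ 2 := by rw [hx2, mul_one]
  have hsum : ∑ k, A.mulVec x k ^ 2 ≤ (K : ℝ) * m * b ^ 2 := by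
    calc ∑ k, A.mulVec x k ^ 2 ≤ ∑ k : Fin K, ∑ j, A k j ^ 2 :=
          Finset.sum_le_sum fun k _ => key k
      _ ≤ ∑ _k : Fin K, ∑ _j : Fin m, b ^ 2 := by
          refine Finset.sum_le_sum fun k _ => Finset.sum_le_sum fun j _ => ?_
          calc A k j ^ 2 = |A k j| ^ 2 := (sq_abs _).symm
            _ ≤ b ^ 2 := pow_le_pow_left₀ (abs_nonneg _) (hA k j) 2
      _ = (K : ℝ) * m * b ^ 2 := by simp [Finset.sum_const]; ring
  calc euclNorm (A.mulVec x) = Real.sqrt (∑ k, A.mulVec x k ^ 2) := rfl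
    _ ≤ Real.sqrt ((K : ℝ) * m * b ^ 2) := Real.sqrt_le_sqrt hsum
    _ = Real.sqrt ((K : ℝ) * m) * b := by
        rw [Real.sqrt_mul (by positivity), Real.sqrt_sq hb]

lemma sigmaMin_perturb {K m : ℕ} (hm : 0 < m) (A0 At : Matrix (Fin K) (Fin m) ℝ) (ε : ℝ)
    (h : ∀ x : Fin m → ℝ, euclNorm x = 1 → euclNorm ((A0 - At).mulVec x) ≤ ε) :
    sigmaMin A0 - ε ≤ sigmaMin At := by
  haveI := unit_exists hm
  apply le_ciInf
  rintro ⟨x, hx⟩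
  show sigmaMin A0 - ε ≤ euclNorm (At.mulVec x)
  have h1 : sigmaMin A0 ≤ euclNorm (A0.mulVec x) := sigmaMin_le _ _ hx
  have h2 : euclNorm (A0.mulVec x) ≤ euclNorm (At.mulVec x) + euclNorm ((A0 - At).mulVec x) := by
    rw [Matrix.sub_mulVec]
    calc euclNorm (A0.mulVec x)
        = euclNorm (At.mulVec x + (A0.mulVec x - At.mulVec x)) := by
          rw [show At.mulVec x + (A0.mulVec x - At.mulVec x) = A0.mulVec x by abel]
      _ ≤ _ := euclNorm_triangle _ _
  have h3 := h x hx
  linarith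

end AuxLemmas

theorem sigmaMin_stability {N d K m : ℕ} (hKm : m ≤ K) (B : ℝ) (φ : Fin K → ℝ → ℝ)
    (hbd : ∀ k (s : ℝ), |φ k s| ≤ B)
    (hlip : ∀ k (s s' : ℝ), |φ k s - φ k s'| ≤ B * |s - s'|)
    (c : Fin N → ℝ) (xt : Fin m → Fin (d + 1) → ℝ) (T : ℝ)
    (αt : ℝ → Fin K → ℝ) (Vt : ℝ → Fin N → Fin (d + 1) → ℝ)
    (C lam0 : ℝ)
    (hC : C = Real.sqrt (1 + ((⨆ j : Fin m, euclNorm (xt j)) * (⨆ k : Fin K, |αt 0 k|)) ^ 2) *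
        (∑ i, |c i|) * B * Real.sqrt ((K : ℝ) * m))
    (hlam0 : lam0 = sigmaMin (featMat φ c xt (αt 0) (Vt 0)))
    (hpath : ∀ t ∈ Set.Icc (0 : ℝ) T,
      Real.sqrt (euclNorm (αt t - αt 0) ^ 2 + ∑ i, ∑ l, (Vt t i l - Vt 0 i l) ^ 2) ≤
        lam0 / (2 * C)) :
    ∀ t ∈ Set.Icc (0 : ℝ) T, lam0 / 2 ≤ sigmaMin (featMat φ c xt (αt t) (Vt t)) := by
  intro t ht
  rcases Nat.eq_zero_or_pos m with hm | hm
  · subst hm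
    rw [hlam0, sigmaMin_zero_cols, sigmaMin_zero_cols]
    norm_num
  have hKpos : 0 < K := lt_of_lt_of_le hm hKm
  have hB : 0 ≤ B := le_trans (abs_nonneg _) (hbd ⟨0, hKpos⟩ 0)
  have hlamnn : 0 ≤ lam0 := hlam0 ▸ sigmaMin_nonneg _
  have hΔ := hpath t ht
  set S := euclNorm (αt t - αt 0) ^ 2 + ∑ i, ∑ l, (Vt t i l - Vt 0 i l) ^ 2 with hSdef
  have hSnn : 0 ≤ S := by
    rw [hSdef]; positivity
  have hΔ0 : (0 : ℝ) ≤ Real.sqrt S := Real.sqrt_nonneg _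
  rcases le_or_gt C 0 with hCle | hCpos
  · -- degenerate case: the path is constant
    have hquot : lam0 / (2 * C) ≤ 0 := by
      rcases lt_or_eq_of_le hCle with h | h
      · exact div_nonpos_iff.mpr (Or.inl ⟨hlamnn, by linarith⟩)
      · rw [h]; simp
    have hzero : Real.sqrt S = 0 := le_antisymm (le_trans hΔ hquot) hΔ0
    have hS0 : S ≤ 0 := Real.sqrt_eq_zero'.mp hzero
    have h1 : euclNorm (αt t - αt 0) ^ 2 = 0 := by
      have h2 : 0 ≤ ∑ i, ∑ l, (Vt t i l - Vt 0 i l) ^ 2 := by positivity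
      nlinarith [sq_nonneg (euclNorm (αt t - αt 0))]
    have h2 : ∑ i, ∑ l, (Vt t i l - Vt 0 i l) ^ 2 = 0 := by
      have h3 : 0 ≤ euclNorm (αt t - αt 0) ^ 2 := sq_nonneg _
      have h4 : 0 ≤ ∑ i, ∑ l, (Vt t i l - Vt 0 i l) ^ 2 := by positivity
      nlinarith
    have hα : αt t = αt 0 := by
      funext k
      have h1' : ∑ k', ((αt t - αt 0) k') ^ 2 = 0 := by rw [← euclNorm_sq]; exact h1
      have h5 := (Finset.sum_eq_zero_iff_of_nonneg fun k' _ => sq_nonneg _).mp h1' k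
        (Finset.mem_univ k)
      have h6 : αt t k - αt 0 k = 0 := by
        have := (pow_eq_zero_iff (n := 2) (by norm_num)).mp h5
        simpa [Pi.sub_apply] using this
      linarith
    have hV : Vt t = Vt 0 := by
      funext i l
      have hi := (Finset.sum_eq_zero_iff_of_nonneg
        fun i _ => Finset.sum_nonneg fun l _ => sq_nonneg _).mp h2 i (Finset.mem_univ i)
      have hl := (Finset.sum_eq_zero_iff_of_nonneg fun l _ => sq_nonneg _).mp hi l
        (Finset.mem_univ l)
      have h6 : Vt t i l - Vt 0 i l = 0 := (pow_eq_zero_iff (n := 2) (by norm_num)).mp hl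
      linarith
    rw [hα, hV, ← hlam0]
    linarith
  -- main case: C > 0
  set Mx := ⨆ j : Fin m, euclNorm (xt j) with hMxdef
  set Mα := ⨆ k : Fin K, |αt 0 k| with hMαdef
  have hMxle : ∀ j, euclNorm (xt j) ≤ Mx := by
    intro j
    rw [hMxdef]
    exact le_ciSup (f := fun j => euclNorm (xt j))
      (Set.Finite.bddAbove (Set.finite_range _)) j
  have hMαle : ∀ k, |αt 0 k| ≤ Mα := by
    intro k
    rw [hMαdef]
    exact le_ciSup (f := fun k => |αt 0 k|)
      (Set.Finite.bddAbove (Set.finite_range _)) k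
  have hMxnn : 0 ≤ Mx := le_trans (euclNorm_nonneg (xt ⟨0, hm⟩)) (hMxle ⟨0, hm⟩)
  have hMαnn : 0 ≤ Mα := le_trans (abs_nonneg _) (hMαle ⟨0, hKpos⟩)
  set L := Mx * Mα with hLdef
  have hLnn : 0 ≤ L := mul_nonneg hMxnn hMαnn
  set D := Real.sqrt (1 + L ^ 2) * (∑ i, |c i|) * B with hDdef
  have hDnn : 0 ≤ D := by
    apply mul_nonneg (mul_nonneg (Real.sqrt_nonneg _) ?_) hB
    exact Finset.sum_nonneg fun i _ => abs_nonneg _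
  set A0 := featMat φ c xt (αt 0) (Vt 0) with hA0def
  set At := featMat φ c xt (αt t) (Vt t) with hAtdef
  -- entrywise bound on the perturbation
  have key : ∀ k j, |At k j - A0 k j| ≤ D * Real.sqrt S := by
    intro k j
    set X := |αt t k - αt 0 k| with hXdef
    have hXnn : (0 : ℝ) ≤ X := abs_nonneg _
    have hsplit : At k j - A0 k j
        = ∑ i, (c i * αt t k * φ k (∑ l, Vt t i l * xt j l)
            - c i * αt 0 k * φ k (∑ l, Vt 0 i l * xt j l)) := by
      rw [hAtdef, hA0def]
      simp [featMat, Finset.sum_sub_distrib]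
    rw [hsplit]
    have hterm : ∀ i : Fin N,
        |c i * αt t k * φ k (∑ l, Vt t i l * xt j l)
          - c i * αt 0 k * φ k (∑ l, Vt 0 i l * xt j l)|
        ≤ |c i| * (B * (Real.sqrt (1 + L ^ 2) * Real.sqrt S)) := by
      intro i
      set s1 := ∑ l, Vt t i l * xt j l with hs1
      set s0 := ∑ l, Vt 0 i l * xt j l with hs0
      set w := euclNorm (fun l => Vt t i l - Vt 0 i l) with hwdef
      have hwnn : 0 ≤ w := euclNorm_nonneg _
      have hs : |s1 - s0| ≤ w * Mx := by
        have he : s1 - s0 = ∑ l, (fun l => Vt t i l - Vt 0 i l) l * xt j l := by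
          rw [hs1, hs0, ← Finset.sum_sub_distrib]
          exact Finset.sum_congr rfl fun l _ => by ring
        rw [he]
        calc |∑ l, (fun l => Vt t i l - Vt 0 i l) l * xt j l|
            ≤ euclNorm (fun l => Vt t i l - Vt 0 i l) * euclNorm (xt j) := abs_sum_mul_le _ _
          _ ≤ w * Mx := mul_le_mul_of_nonneg_left (hMxle j) hwnn
      have h1 : |αt t k * φ k s1 - αt 0 k * φ k s0| ≤ X * B + Mα * (B * (w * Mx)) := by
        have he : αt t k * φ k s1 - αt 0 k * φ k s0
            = (αt t k - αt 0 k) * φ k s1 + αt 0 k * (φ k s1 - φ k s0) := by ring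
        rw [he]
        calc |(αt t k - αt 0 k) * φ k s1 + αt 0 k * (φ k s1 - φ k s0)|
            ≤ |(αt t k - αt 0 k) * φ k s1| + |αt 0 k * (φ k s1 - φ k s0)| := abs_add_le _ _
          _ = X * |φ k s1| + |αt 0 k| * |φ k s1 - φ k s0| := by rw [abs_mul, abs_mul]
          _ ≤ X * B + Mα * (B * (w * Mx)) := by
              refine add_le_add (mul_le_mul_of_nonneg_left (hbd k s1) hXnn) ?_
              refine mul_le_mul (hMαle k) ?_ (abs_nonneg _) hMαnn
              exact le_trans (hlip k s1 s0) (mul_le_mul_of_nonneg_left hs hB)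
      have h3 : X + L * w ≤ Real.sqrt (1 + L ^ 2) * Real.sqrt (X ^ 2 + w ^ 2) :=
        add_mul_le_sqrt L X w hXnn hwnn hLnn
      have h4 : Real.sqrt (X ^ 2 + w ^ 2) ≤ Real.sqrt S := by
        apply Real.sqrt_le_sqrt
        rw [hSdef]
        have hXle : X ^ 2 ≤ euclNorm (αt t - αt 0) ^ 2 := by
          rw [euclNorm_sq]
          have hXe : X ^ 2 = ((αt t - αt 0) k) ^ 2 := by
            rw [hXdef]; simp [sq_abs, Pi.sub_apply]
          rw [hXe]
          exact Finset.single_le_sum (f := fun k' => ((αt t - αt 0) k') ^ 2)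
            (fun _ _ => sq_nonneg _) (Finset.mem_univ k)
        have hwle : w ^ 2 ≤ ∑ i', ∑ l, (Vt t i' l - Vt 0 i' l) ^ 2 := by
          rw [hwdef, euclNorm_sq]
          exact Finset.single_le_sum (f := fun i' => ∑ l, (Vt t i' l - Vt 0 i' l) ^ 2)
            (fun _ _ => Finset.sum_nonneg fun _ _ => sq_nonneg _) (Finset.mem_univ i)
        linarith
      calc |c i * αt t k * φ k s1 - c i * αt 0 k * φ k s0|
          = |c i| * |αt t k * φ k s1 - αt 0 k * φ k s0| := by
            rw [← abs_mul]; congr 1; ring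
        _ ≤ |c i| * (X * B + Mα * (B * (w * Mx))) :=
            mul_le_mul_of_nonneg_left h1 (abs_nonneg _)
        _ = |c i| * (B * (X + L * w)) := by rw [hLdef]; ring
        _ ≤ |c i| * (B * (Real.sqrt (1 + L ^ 2) * Real.sqrt (X ^ 2 + w ^ 2))) := by
            refine mul_le_mul_of_nonneg_left (mul_le_mul_of_nonneg_left h3 hB) (abs_nonneg _)
        _ ≤ |c i| * (B * (Real.sqrt (1 + L ^ 2) * Real.sqrt S)) := by
            refine mul_le_mul_of_nonneg_left (mul_le_mul_of_nonneg_left ?_ hB) (abs_nonneg _)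
            exact mul_le_mul_of_nonneg_left h4 (Real.sqrt_nonneg _)
    calc |∑ i, (c i * αt t k * φ k (∑ l, Vt t i l * xt j l)
            - c i * αt 0 k * φ k (∑ l, Vt 0 i l * xt j l))|
        ≤ ∑ i, |c i * αt t k * φ k (∑ l, Vt t i l * xt j l)
            - c i * αt 0 k * φ k (∑ l, Vt 0 i l * xt j l)| := Finset.abs_sum_le_sum_abs _ _
      _ ≤ ∑ i, |c i| * (B * (Real.sqrt (1 + L ^ 2) * Real.sqrt S)) :=
          Finset.sum_le_sum fun i _ => hterm i
      _ = (∑ i, |c i|) * (B * (Real.sqrt (1 + L ^ 2) * Real.sqrt S)) := by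
          rw [← Finset.sum_mul]
      _ = D * Real.sqrt S := by rw [hDdef]; ring
  have hCD : C = D * Real.sqrt ((K : ℝ) * m) := by rw [hC, hDdef]
  have hbound : ∀ x : Fin m → ℝ, euclNorm x = 1 →
      euclNorm ((A0 - At).mulVec x) ≤ lam0 / 2 := by
    intro x hx
    have hb := mulVec_bound (A0 - At) x hx (D * Real.sqrt S)
      (mul_nonneg hDnn hΔ0) ?_
    · calc euclNorm ((A0 - At).mulVec x)
          ≤ Real.sqrt ((K : ℝ) * m) * (D * Real.sqrt S) := hb
        _ = C * Real.sqrt S := by rw [hCD]; ring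
        _ ≤ C * (lam0 / (2 * C)) := mul_le_mul_of_nonneg_left hΔ hCpos.le
        _ = lam0 / 2 := by
            have hC0 : C ≠ 0 := hCpos.ne'
            field_simp
    · intro k j
      rw [Matrix.sub_apply, abs_sub_comm]
      exact key k j
  have hfin := sigmaMin_perturb hm A0 At (lam0 / 2) hbound
  linarith
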